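/- Let F be a field of characteristic p > 0 and let {a₁,…,a_m} ⊆ F* be p-independent over F, so that π = ⟪a₁,…,a_m⟫ is anisotropic over F. Set E₀ = F and Eᵢ = F(a₁^{1/p},…,aᵢ^{1/p}) for 1 ≤ i ≤ m, inside a fixed algebraic closure of F. Then for every 0 ≤ i ≤ m: the quasi-Pfister form ⟪a_{i+1},…,a_m⟫ is anisotropic over Eᵢ, D_{Eᵢ}(π) = D_{Eᵢ}(⟪a_{i+1},…,a_m⟫), and dim(π_{Eᵢ})_an = p^{m−i} (i.e., i_d(π_{Eᵢ}) = p^m − p^{m−i}). -/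

import Mathlib

open scoped BigOperators

set_option synthInstance.maxHeartbeats 1000000
set_option maxHeartbeats 1000000

/-- The subfield `F^p` of `p`-th powers of `F` (generated as a subfield). -/
def pPow (p : ℕ) (F : Type*) [Field F] : Subfield F :=
  Subfield.closure (Set.range fun x : F => x ^ p)

/-- The degree `[F^p(S) : F^p]`. -/
noncomputable def pDeg (p : ℕ) {F : Type*} [Field F] (S : Set F) : ℕ :=
  Module.finrank ↥(pPow p F) ↥(IntermediateField.adjoin ↥(pPow p F) S)

/-- A finite family `a : ι → F` is `p`-independent over `F` if
`[F^p(a i, i : ι) : F^p] = p ^ #ι`. -/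
def pIndep (p : ℕ) {F : Type*} [Field F] {ι : Type*} [Fintype ι] (a : ι → F) : Prop :=
  pDeg p (Set.range a) = p ^ Fintype.card ι

/-- The defect `i_d(φ_E)` of the diagonal quasilinear `p`-form with coefficients `a` over `E`:
the `E`-dimension of its zero set (an `E`-subspace in characteristic `p`). -/
noncomputable def defect (p : ℕ) (E : Type*) [Field E] {ι : Type*} [Fintype ι] (a : ι → E) : ℕ :=
  Module.finrank E ↥(Submodule.span E {x : ι → E | ∑ i, a i * x i ^ p = 0})

/-- A diagonal quasilinear `p`-form is anisotropic over `E`. -/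
def Anisotropic (p : ℕ) (E : Type*) [Field E] {ι : Type*} [Fintype ι] (a : ι → E) : Prop :=
  ∀ x : ι → E, ∑ i, a i * x i ^ p = 0 → x = 0

/-- The value set `D_E(φ)` of a diagonal quasilinear `p`-form. -/
def valueSet (p : ℕ) (E : Type*) [Field E] {ι : Type*} [Fintype ι] (a : ι → E) : Set E :=
  {y | ∃ x : ι → E, y = ∑ i, a i * x i ^ p}

section PartA

variable {K L : Type*} [Field K] [Field L] [Algebra K L] {n p : ℕ}

/-- The span of the restricted monomials in `b` equals the subalgebra generated by the `b j`,
provided each `b j ^ p` comes from `K`. -/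
lemma monomial_span (hp : 2 ≤ p) (b : Fin n → L)
    (hb : ∀ j, ∃ c : K, b j ^ p = algebraMap K L c) :
    Submodule.span K (Set.range fun e : Fin n → Fin p => ∏ j, b j ^ (e j : ℕ)) =
      Subalgebra.toSubmodule (Algebra.adjoin K (Set.range b)) := by
  choose c hc using hb
  set V := Submodule.span K (Set.range fun e : Fin n → Fin p => ∏ j, b j ^ (e j : ℕ)) with hV
  have hone : (1 : L) ∈ V := by
    apply Submodule.subset_span
    exact ⟨fun _ => ⟨0, by omega⟩, by simp⟩
  have hmono : ∀ e : Fin n → Fin p, (∏ j, b j ^ (e j : ℕ)) ∈ V := fun e =>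
    Submodule.subset_span ⟨e, rfl⟩
  -- product of two monomials is a scalar multiple of a monomial
  have hmulmono : ∀ e f : Fin n → Fin p,
      (∏ j, b j ^ (e j : ℕ)) * (∏ j, b j ^ (f j : ℕ)) ∈ V := by
    intro e f
    have key : (∏ j, b j ^ (e j : ℕ)) * (∏ j, b j ^ (f j : ℕ)) =
        algebraMap K L (∏ j, c j ^ (((e j : ℕ) + (f j : ℕ)) / p)) *
          ∏ j, b j ^ ((((e j : ℕ) + (f j : ℕ)) % p)) := by
      rw [← Finset.prod_mul_distrib, map_prod, ← Finset.prod_mul_distrib]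
      refine Finset.prod_congr rfl fun j _ => ?_
      rw [← pow_add, map_pow, ← hc j, ← pow_mul, ← pow_add]
      congr 1
      exact (Nat.div_add_mod _ p).symm
    rw [key]
    have : (∏ j, b j ^ ((((e j : ℕ) + (f j : ℕ)) % p))) ∈ V := by
      have := hmono (fun j => (⟨((e j : ℕ) + (f j : ℕ)) % p, Nat.mod_lt _ (by omega)⟩ : Fin p))
      simpa using this
    have h2 := V.smul_mem (∏ j, c j ^ (((e j : ℕ) + (f j : ℕ)) / p)) this
    rwa [Algebra.smul_def] at h2
  have hmul : ∀ x y : L, x ∈ V → y ∈ V → x * y ∈ V := by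
    intro x y hx hy
    induction hx using Submodule.span_induction with
    | mem x hxm =>
      induction hy using Submodule.span_induction with
      | mem y hym =>
        obtain ⟨e, rfl⟩ := hxm
        obtain ⟨f, rfl⟩ := hym
        exact hmulmono e f
      | zero => simpa using V.zero_mem
      | add y z _ _ hy1 hz1 => rw [mul_add]; exact V.add_mem hy1 hz1
      | smul a y _ hy1 => rw [mul_smul_comm]; exact V.smul_mem a hy1
    | zero => simpa using V.zero_mem
    | add x z _ _ hx1 hz1 => rw [add_mul]; exact V.add_mem hx1 hz1
    | smul a x _ hx1 => rw [smul_mul_assoc]; exact V.smul_mem a hx1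
  -- V as a subalgebra
  let A : Subalgebra K L := Submodule.toSubalgebra V hone hmul
  have hbV : ∀ j, b j ∈ V := by
    intro j
    have := hmono (fun k => if k = j then ⟨1, by omega⟩ else ⟨0, by omega⟩)
    have heq : (∏ k, b k ^ ((if k = j then (⟨1, by omega⟩ : Fin p) else ⟨0, by omega⟩) : Fin p).val) = b j := by
      rw [Finset.prod_eq_single j]
      · simp
      · intro k _ hk; simp [hk]
      · simp
    rwa [heq] at this
  apply le_antisymm
  · rw [Submodule.span_le]
    rintro _ ⟨e, rfl⟩
    exact Subalgebra.prod_mem _ fun j _ =>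
      Subalgebra.pow_mem _ (Algebra.subset_adjoin (Set.mem_range_self j)) _
  · have hle : Algebra.adjoin K (Set.range b) ≤ A := by
      apply Algebra.adjoin_le
      intro x hx
      obtain ⟨j, rfl⟩ := hx
      exact hbV j
    exact fun x hx => hle hx

end PartA

lemma monomial_span_field {K L : Type*} [Field K] [Field L] [Algebra K L] {n p : ℕ}
    (hp : 2 ≤ p) (b : Fin n → L)
    (hb : ∀ j, ∃ c : K, b j ^ p = algebraMap K L c) :
    Submodule.span K (Set.range fun e : Fin n → Fin p => ∏ j, b j ^ (e j : ℕ)) =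
      Subalgebra.toSubmodule (IntermediateField.adjoin K (Set.range b)).toSubalgebra := by
  rw [monomial_span hp b hb, IntermediateField.adjoin_toSubalgebra_of_isAlgebraic]
  rintro x hx
  obtain ⟨j, rfl⟩ := hx
  obtain ⟨c, hc⟩ := hb j
  refine ⟨Polynomial.X ^ p - Polynomial.C c, Polynomial.X_pow_sub_C_ne_zero (by omega) c, ?_⟩
  simp [hc, sub_eq_zero]

lemma monomial_linearIndependent (p : ℕ) [Fact p.Prime] (F : Type*) [Field F] [CharP F p]
    {m : ℕ} (a : Fin m → F) (hindep : pIndep p a) :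
    LinearIndependent ↥(pPow p F) (fun e : Fin m → Fin p => ∏ j, a j ^ (e j : ℕ)) := by
  have hp2 : 2 ≤ p := (Fact.out : p.Prime).two_le
  rw [linearIndependent_iff_card_eq_finrank_span]
  have hb : ∀ j, ∃ c : ↥(pPow p F), a j ^ p = algebraMap ↥(pPow p F) F c :=
    fun j => ⟨⟨a j ^ p, Subfield.subset_closure ⟨a j, rfl⟩⟩, rfl⟩
  have hspan := monomial_span_field hp2 a hb
  rw [Set.finrank, hspan]
  rw [pIndep, pDeg] at hindep
  simp only [Fintype.card_fun, Fintype.card_fin] at *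
  exact hindep.symm

lemma key_indep (p : ℕ) [Fact p.Prime] {F : Type*} [Field F] [CharP F p]
    {m : ℕ} (a : Fin m → F) (hindep : pIndep p a) (d : (Fin m → Fin p) → F)
    (h : ∑ f : Fin m → Fin p, d f ^ p * ∏ j, a j ^ ((f j : ℕ)) = 0) : ∀ f, d f = 0 := by
  have hli := monomial_linearIndependent p F a hindep
  rw [Fintype.linearIndependent_iff] at hli
  have hz := hli (fun f => ⟨d f ^ p, Subfield.subset_closure ⟨d f, rfl⟩⟩) ?_
  · intro f
    have h2 : d f ^ p = 0 := congrArg Subtype.val (hz f)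
    have hp0 : p ≠ 0 := (Fact.out : p.Prime).ne_zero
    exact (pow_eq_zero_iff hp0).mp h2
  · rw [← h]
    exact Finset.sum_congr rfl fun f _ => rfl

section Split

variable {p m i : ℕ}

/-- Splitting `Fin m → Fin p` into head (first `i`) and tail exponent vectors. -/
def splitEquiv (p m i : ℕ) (hi : i ≤ m) :
    ((Fin i → Fin p) × (Fin (m - i) → Fin p)) ≃ (Fin m → Fin p) where
  toFun x j := if h : (j : ℕ) < i then x.1 ⟨j, h⟩ else x.2 ⟨(j : ℕ) - i, by omega⟩
  invFun f := (fun k => f ⟨k, by omega⟩, fun s => f ⟨i + (s : ℕ), by omega⟩)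
  left_inv x := by
    refine Prod.ext (funext fun k => ?_) (funext fun s => ?_)
    · have hk : ((⟨(k : ℕ), by omega⟩ : Fin m) : ℕ) < i := k.isLt
      simp only [dif_pos hk]
    · have hs : ¬ ((⟨i + (s : ℕ), by omega⟩ : Fin m) : ℕ) < i := by simp
      simp only [dif_neg hs]
      congr 1
      ext
      simp
  right_inv f := by
    funext j
    by_cases h : (j : ℕ) < i
    · simp only [dif_pos h]
    · simp only [dif_neg h]
      congr 1
      ext
      simp
      omega

lemma prod_fin_split {M : Type*} [CommMonoid M] (hi : i ≤ m) (v : Fin m → M) :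
    ∏ j, v j = (∏ k : Fin i, v ⟨(k : ℕ), by omega⟩) *
      ∏ s : Fin (m - i), v ⟨i + (s : ℕ), by omega⟩ := by
  set f : ℕ → M := fun j => if h : j < m then v ⟨j, h⟩ else 1 with hf
  have h1 : ∏ j, v j = ∏ j ∈ Finset.range m, f j := by
    rw [← Fin.prod_univ_eq_prod_range]
    exact Finset.prod_congr rfl fun j _ => by simp [hf]
  have h2 : Finset.range m = Finset.range (i + (m - i)) := by congr 1; omega
  rw [h1, h2, Finset.prod_range_add, ← Fin.prod_univ_eq_prod_range,
    ← Fin.prod_univ_eq_prod_range]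
  congr 1
  · exact Finset.prod_congr rfl fun k _ => by
      have : (k : ℕ) < m := by omega
      simp [hf, this]
  · exact Finset.prod_congr rfl fun s _ => by
      have : i + (s : ℕ) < m := by omega
      simp [hf, this]

/-- The full monomial at a split index equals head monomial times tail monomial. -/
lemma monomial_split {R : Type*} [CommMonoid R] (hi : i ≤ m) (a : Fin m → R)
    (h : Fin i → Fin p) (t : Fin (m - i) → Fin p) :
    (∏ j, a j ^ ((splitEquiv p m i hi (h, t) j : ℕ))) =
      (∏ k : Fin i, a ⟨(k : ℕ), by omega⟩ ^ ((h k : ℕ))) *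
        ∏ s : Fin (m - i), a ⟨i + (s : ℕ), by omega⟩ ^ ((t s : ℕ)) := by
  rw [prod_fin_split hi (fun j => a j ^ ((splitEquiv p m i hi (h, t) j : ℕ)))]
  congr 1
  · refine Finset.prod_congr rfl fun k _ => ?_
    congr 2
    simp only [splitEquiv, Equiv.coe_fn_mk]
    rw [dif_pos k.isLt]
  · refine Finset.prod_congr rfl fun s _ => ?_
    congr 2
    simp only [splitEquiv, Equiv.coe_fn_mk]
    rw [dif_neg (by simp)]
    exact congrArg t (Fin.ext (by simp))

end Split

/-- Splitting of an anisotropic quasi-Pfister form `π = ⟪a₁,…,a_m⟫` along the tower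
`Eᵢ = F(a₁^{1/p},…,aᵢ^{1/p})`: `⟪a_{i+1},…,a_m⟫` stays anisotropic over `Eᵢ`, it has the same
value set as `π` over `Eᵢ`, and `dim(π_{Eᵢ})_an = p^{m-i}`. -/
theorem pfister_insepTower_splitting (p : ℕ) [Fact p.Prime] (F : Type*) [Field F] [CharP F p]
    (m : ℕ) (a : Fin m → F) (ha0 : ∀ i, a i ≠ 0) (hindep : pIndep p a)
    (α : Fin m → AlgebraicClosure F)
    (hα : ∀ i, α i ^ p = algebraMap F (AlgebraicClosure F) (a i))
    (E : ℕ → IntermediateField F (AlgebraicClosure F))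
    (hE : ∀ i, E i = IntermediateField.adjoin F (α '' {j | (j : ℕ) < i}))
    (i : ℕ) (hi : i ≤ m) :
    Anisotropic p ↥(E i) (fun idx : Fin (m - i) → Fin p => algebraMap F ↥(E i)
        (∏ t : Fin (m - i), a ⟨i + (t : ℕ), by have := t.isLt; omega⟩ ^ (idx t : ℕ))) ∧
    valueSet p ↥(E i)
        (fun idx : Fin m → Fin p => algebraMap F ↥(E i) (∏ t, a t ^ (idx t : ℕ))) =
      valueSet p ↥(E i) (fun idx : Fin (m - i) → Fin p => algebraMap F ↥(E i)
        (∏ t : Fin (m - i), a ⟨i + (t : ℕ), by have := t.isLt; omega⟩ ^ (idx t : ℕ))) ∧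
    defect p ↥(E i)
        (fun idx : Fin m → Fin p => algebraMap F ↥(E i) (∏ t, a t ^ (idx t : ℕ))) =
      p ^ m - p ^ (m - i) := by
  classical
  have hp : p.Prime := Fact.out
  have hp2 : 2 ≤ p := hp.two_le
  haveI : CharP (AlgebraicClosure F) p :=
    charP_of_injective_algebraMap (algebraMap F (AlgebraicClosure F)).injective p
  haveI : CharP ↥(E i) p := charP_of_injective_algebraMap (algebraMap F ↥(E i)).injective p
  set σ := splitEquiv p m i hi with hσdef
  set tmon : (Fin (m - i) → Fin p) → F :=
    fun t => ∏ s : Fin (m - i), a ⟨i + (s : ℕ), by have := s.isLt; omega⟩ ^ ((t s : ℕ)) with htmon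
  set hmon : (Fin i → Fin p) → F :=
    fun h => ∏ k : Fin i, a ⟨(k : ℕ), by have := k.isLt; omega⟩ ^ ((h k : ℕ)) with hhmon
  set fmon : (Fin m → Fin p) → F := fun f => ∏ j, a j ^ ((f j : ℕ)) with hfmon
  have hsplitmon : ∀ h t, fmon (σ (h, t)) = hmon h * tmon t :=
    fun h t => monomial_split hi a h t
  -- the roots generating `E i`
  set αE : Fin i → (AlgebraicClosure F) := fun k => α ⟨(k : ℕ), by have := k.isLt; omega⟩ with hαE
  have hαEp : ∀ k : Fin i, αE k ^ p = algebraMap F (AlgebraicClosure F) (a ⟨(k : ℕ), by have := k.isLt; omega⟩) :=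
    fun k => hα _
  have hbΩ : ∀ k : Fin i, ∃ c : F, αE k ^ p = algebraMap F (AlgebraicClosure F) c :=
    fun k => ⟨_, hαEp k⟩
  have hrange : Set.range αE = α '' {j | (j : ℕ) < i} := by
    ext x
    constructor
    · rintro ⟨k, rfl⟩
      exact ⟨⟨(k : ℕ), by have := k.isLt; omega⟩, k.isLt, rfl⟩
    · rintro ⟨j, hj, rfl⟩
      exact ⟨⟨(j : ℕ), hj⟩, rfl⟩
  have hαmem : ∀ k : Fin i, αE k ∈ E i := by
    intro k
    rw [hE]
    exact IntermediateField.subset_adjoin _ _ ⟨⟨(k : ℕ), by have := k.isLt; omega⟩, k.isLt, rfl⟩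
  -- description of elements of `E i`
  have hEmem : ∀ c : (AlgebraicClosure F), c ∈ E i →
      ∃ d : (Fin i → Fin p) → F,
        ∑ h : Fin i → Fin p, algebraMap F (AlgebraicClosure F) (d h) * ∏ k, αE k ^ ((h k : ℕ)) = c := by
    intro c hc
    have hmem : c ∈ Submodule.span F
        (Set.range fun e : Fin i → Fin p => ∏ k, αE k ^ ((e k : ℕ))) := by
      rw [monomial_span_field hp2 αE hbΩ]
      rw [Subalgebra.mem_toSubmodule, IntermediateField.mem_toSubalgebra, hrange, ← hE]
      exact hc
    rw [Submodule.mem_span_range_iff_exists_fun] at hmem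
    obtain ⟨d, hd⟩ := hmem
    exact ⟨d, by simpa [Algebra.smul_def] using hd⟩
  -- Claim 1 : anisotropy of the tail form over E i
  have claim1 : Anisotropic p ↥(E i) (fun t => algebraMap F ↥(E i) (tmon t)) := by
    intro x hx
    have hx' : ∑ t, algebraMap F (AlgebraicClosure F) (tmon t) * ((x t : (AlgebraicClosure F))) ^ p = 0 := by
      have h0 := congrArg (Subtype.val : ↥(E i) → (AlgebraicClosure F)) hx
      push_cast at h0
      convert h0 using 2 with t
    choose d hd using fun t => hEmem (x t) (x t).2
    have hexp : ∀ t, ((x t : (AlgebraicClosure F))) ^ p =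
        ∑ h : Fin i → Fin p, algebraMap F (AlgebraicClosure F) (d t h ^ p * hmon h) := by
      intro t
      rw [← hd t, sum_pow_char]
      refine Finset.sum_congr rfl fun h _ => ?_
      rw [mul_pow, ← Finset.prod_pow, map_mul, map_pow]
      congr 1
      rw [hhmon, map_prod]
      refine Finset.prod_congr rfl fun k _ => ?_
      rw [← pow_mul, mul_comm ((h k : ℕ)) p, pow_mul, hαEp k, map_pow]
    have hsum : algebraMap F (AlgebraicClosure F)
        (∑ t, ∑ h : Fin i → Fin p, d t h ^ p * (hmon h * tmon t)) = 0 := by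
      rw [map_sum]
      rw [← hx']
      refine Finset.sum_congr rfl fun t _ => ?_
      rw [hexp t, Finset.mul_sum, map_sum]
      refine Finset.sum_congr rfl fun h _ => ?_
      simp only [map_mul]
      ring
    have hS : (∑ t, ∑ h : Fin i → Fin p, d t h ^ p * (hmon h * tmon t)) = 0 :=
      (map_eq_zero_iff _ (algebraMap F (AlgebraicClosure F)).injective).mp hsum
    set D : (Fin m → Fin p) → F := fun f => d (σ.symm f).2 (σ.symm f).1 with hD
    have hDsum : ∑ f : Fin m → Fin p, D f ^ p * fmon f = 0 := by
      rw [← Equiv.sum_comp σ (fun f => D f ^ p * fmon f), Fintype.sum_prod_type, Finset.sum_comm,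
        ← hS]
      refine Finset.sum_congr rfl fun t _ => Finset.sum_congr rfl fun h _ => ?_
      rw [hD]
      simp only [Equiv.symm_apply_apply]
      rw [hsplitmon h t]
    have hD0 := key_indep p a hindep D hDsum
    have hd0 : ∀ t h, d t h = 0 := by
      intro t h
      have hzz := hD0 (σ (h, t))
      rw [hD] at hzz
      simpa using hzz
    funext t
    have hx0 : ((x t : (AlgebraicClosure F))) = 0 := by
      rw [← hd t]
      simp [hd0]
    exact Subtype.ext hx0
  -- the p-th roots of the head monomials, inside E i
  set αEi : Fin i → ↥(E i) := fun k => ⟨αE k, hαmem k⟩ with hαEi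
  set β : (Fin i → Fin p) → ↥(E i) := fun h => ∏ k, αEi k ^ ((h k : ℕ)) with hβ
  have hαEip : ∀ k : Fin i, αEi k ^ p =
      algebraMap F ↥(E i) (a ⟨(k : ℕ), by have := k.isLt; omega⟩) := by
    intro k
    apply Subtype.ext
    push_cast
    rw [hαEp k]
  have hβp : ∀ h, β h ^ p = algebraMap F ↥(E i) (hmon h) := by
    intro h
    rw [hβ]
    simp only
    rw [← Finset.prod_pow, hhmon, map_prod]
    refine Finset.prod_congr rfl fun k _ => ?_
    rw [← pow_mul, mul_comm ((h k : ℕ)) p, pow_mul, hαEip k, map_pow]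
  set h₀ : Fin i → Fin p := fun _ => ⟨0, by omega⟩ with hh₀
  have hβ0 : β h₀ = 1 := by simp [hβ, hh₀]
  -- the key computation
  have hcomp : ∀ x : (Fin m → Fin p) → ↥(E i),
      ∑ f : Fin m → Fin p, algebraMap F ↥(E i) (fmon f) * x f ^ p =
        ∑ t, algebraMap F ↥(E i) (tmon t) * (∑ h : Fin i → Fin p, β h * x (σ (h, t))) ^ p := by
    intro x
    rw [← Equiv.sum_comp σ (fun f => algebraMap F ↥(E i) (fmon f) * x f ^ p),
      Fintype.sum_prod_type, Finset.sum_comm]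
    refine Finset.sum_congr rfl fun t _ => ?_
    rw [sum_pow_char, Finset.mul_sum]
    refine Finset.sum_congr rfl fun h _ => ?_
    rw [mul_pow, hβp h, hsplitmon h t, map_mul]
    ring
  -- section used for surjectivity and value-set inclusion
  have hsection : ∀ y : (Fin (m - i) → Fin p) → ↥(E i), ∀ t,
      (∑ h : Fin i → Fin p,
        β h * (fun f => if (σ.symm f).1 = h₀ then y (σ.symm f).2 else 0) (σ (h, t))) = y t := by
    intro y t
    have : ∀ h : Fin i → Fin p,
        β h * (fun f => if (σ.symm f).1 = h₀ then y (σ.symm f).2 else 0) (σ (h, t)) =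
          if h = h₀ then β h * y t else 0 := by
      intro h
      simp only [Equiv.symm_apply_apply]
      by_cases hh : h = h₀ <;> simp [hh]
    rw [Finset.sum_congr rfl fun h _ => this h, Finset.sum_ite_eq']
    simp [hβ0]
  refine ⟨claim1, ?_, ?_⟩
  · -- value sets agree
    ext y
    constructor
    · rintro ⟨x, rfl⟩
      exact ⟨fun t => ∑ h : Fin i → Fin p, β h * x (σ (h, t)), hcomp x⟩
    · rintro ⟨y0, rfl⟩
      refine ⟨fun f => if (σ.symm f).1 = h₀ then y0 (σ.symm f).2 else 0, ?_⟩
      rw [hcomp]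
      exact Finset.sum_congr rfl fun t _ => by rw [hsection y0 t]
  · -- defect computation
    set Φ : ((Fin m → Fin p) → ↥(E i)) →ₗ[↥(E i)] ((Fin (m - i) → Fin p) → ↥(E i)) :=
      { toFun := fun x t => ∑ h : Fin i → Fin p, β h * x (σ (h, t))
        map_add' := by
          intro x y
          funext t
          simp [mul_add, Finset.sum_add_distrib]
        map_smul' := by
          intro c x
          funext t
          simp only [Pi.smul_apply, smul_eq_mul, RingHom.id_apply, Finset.mul_sum]
          exact Finset.sum_congr rfl fun h _ => by ring } with hΦ
    have hkerset : {x : (Fin m → Fin p) → ↥(E i) |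
        ∑ f : Fin m → Fin p, algebraMap F ↥(E i) (fmon f) * x f ^ p = 0} =
          ↑(LinearMap.ker Φ) := by
      ext x
      simp only [Set.mem_setOf_eq, SetLike.mem_coe, LinearMap.mem_ker]
      constructor
      · intro hx
        rw [hcomp x] at hx
        have := claim1 (fun t => ∑ h : Fin i → Fin p, β h * x (σ (h, t))) hx
        funext t
        have ht := congrFun this t
        simpa [hΦ] using ht
      · intro hx
        rw [hcomp x]
        have : ∀ t, (∑ h : Fin i → Fin p, β h * x (σ (h, t))) = 0 := by
          intro t
          have := congrFun hx t
          simpa [hΦ] using this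
        simp [this, zero_pow hp.ne_zero]
    have hsurj : Function.Surjective Φ := by
      intro y
      refine ⟨fun f => if (σ.symm f).1 = h₀ then y (σ.symm f).2 else 0, ?_⟩
      funext t
      simpa [hΦ] using hsection y t
    have hrn := LinearMap.finrank_range_add_finrank_ker Φ
    rw [LinearMap.range_eq_top.mpr hsurj, finrank_top, Module.finrank_pi, Module.finrank_pi,
      Fintype.card_fun, Fintype.card_fun] at hrn
    simp only [Fintype.card_fin] at hrn
    have hle : p ^ (m - i) ≤ p ^ m := Nat.pow_le_pow_right hp.pos (by omega)
    rw [defect, hkerset, Submodule.span_eq]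
    omega
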